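/- arXiv:1303.6979 — 3 statements merged into one kernel-verified Lean document; each statement's English description precedes it below -/
import Mathlib

section
/- Let X be a topological space, E a topological vector space, and Y a nonempty subset of E. If S : X → 2^Y is a lower semicontinuous correspondence and V is a nonempty open subset of E, then the correspondence T : X → 2^Y defined by T(x) = (S(x) + V) ∩ Y for each x ∈ X has an open graph in X × Y. -/
open Pointwise

/-- Lower semicontinuity of a correspondence. -/
def LSCorr {X Y : Type*} [TopologicalSpace X] [TopologicalSpace Y] (T : X → Set Y) : Prop :=
  ∀ x : X, ∀ V : Set Y, IsOpen V → (T x ∩ V).Nonempty →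
    ∃ U : Set X, IsOpen U ∧ x ∈ U ∧ ∀ y ∈ U, (T y ∩ V).Nonempty

theorem stmt1 {X E : Type*} [TopologicalSpace X] [TopologicalSpace E]
    [AddCommGroup E] [IsTopologicalAddGroup E]
    (Y : Set E) (hY : Y.Nonempty) (S : X → Set E) (hSY : ∀ x, S x ⊆ Y)
    (hS : LSCorr S) (V : Set E) (hV : IsOpen V) (hVne : V.Nonempty) :
    -- the graph of T(x) = (S(x) + V) ∩ Y is open in the subspace X × Y of X × E
    ∃ G : Set (X × E), IsOpen G ∧
      {p : X × E | p.2 ∈ (S p.1 + V) ∩ Y} = G ∩ (Set.univ ×ˢ Y) := by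
  refine ⟨{p : X × E | p.2 ∈ S p.1 + V}, ?_, ?_⟩
  · rw [isOpen_iff_mem_nhds]
    rintro ⟨x, y⟩ hp
    obtain ⟨s, hs, v, hv, hsv⟩ := hp
    have hsv' : s + v = y := hsv
    have hys : y - s ∈ V := by
      have : y - s = v := by rw [← hsv']; abel
      rwa [this]
    have hopen : IsOpen ((fun q : E × E => q.1 - q.2) ⁻¹' V) :=
      hV.preimage (continuous_fst.sub continuous_snd)
    obtain ⟨Ny, Ns, hNy, hNs, hyNy, hsNs, hsub⟩ :=
      isOpen_prod_iff.mp hopen y s hys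
    obtain ⟨U, hU, hxU, hUall⟩ := hS x Ns hNs ⟨s, hs, hsNs⟩
    have hmem : U ×ˢ Ny ∈ nhds (x, y) :=
      prod_mem_nhds (hU.mem_nhds hxU) (hNy.mem_nhds hyNy)
    refine Filter.mem_of_superset hmem ?_
    rintro ⟨u, y'⟩ ⟨huU, hy'⟩
    obtain ⟨s', hs'S, hs'Ns⟩ := hUall u huU
    have hVmem : y' - s' ∈ V := hsub (Set.mk_mem_prod hy' hs'Ns)
    exact ⟨s', hs'S, y' - s', hVmem, by show s' + (y' - s') = y'; rw [add_comm]; exact sub_add_cancel y' s'⟩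
  · ext ⟨x, y⟩
    simp [Set.mem_inter_iff, and_comm]
end

section
/- Let X be a topological space, Y a nonempty subset of a locally convex topological vector space E, T : X → 2^Y a correspondence, 𝔅 a basis of neighbourhoods of 0 in E consisting of open absolutely convex symmetric sets, and D a compact subset of Y. For each V ∈ 𝔅 define T^V : X → 2^Y by T^V(x) = (T(x) + V) ∩ D. Then ⋂_{V ∈ 𝔅} cl-graph-closure(T^V)(x) ⊆ cl-graph-closure(T)(x) for every x ∈ X, where for a correspondence S the map x ↦ S̄(x) = {y ∈ Y : (x,y) ∈ cl(Gr S)} is defined via the closure of its graph in X × Y. -/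
open Pointwise

/-- Graph of a correspondence. -/
def graphOf {X Y : Type*} (T : X → Set Y) : Set (X × Y) := {p | p.2 ∈ T p.1}

/-- The correspondence whose graph is the closure of the graph of `T`. -/
def gclos {X Y : Type*} [TopologicalSpace X] [TopologicalSpace Y]
    (T : X → Set Y) (x : X) : Set Y := {y | (x, y) ∈ closure (graphOf T)}

theorem stmt2 {X E : Type*} [TopologicalSpace X] [TopologicalSpace E]
    [AddCommGroup E] [Module ℝ E] [IsTopologicalAddGroup E] [ContinuousSMul ℝ E]
    [LocallyConvexSpace ℝ E]
    (Y : Set E) (hY : Y.Nonempty) (T : X → Set E) (hTY : ∀ x, T x ⊆ Y)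
    (𝔅 : Set (Set E))
    (h𝔅 : ∀ V ∈ 𝔅, IsOpen V ∧ (0 : E) ∈ V ∧ Balanced ℝ V ∧ Convex ℝ V)
    (h𝔅basis : ∀ U ∈ nhds (0 : E), ∃ V ∈ 𝔅, V ⊆ U)
    (D : Set E) (hD : IsCompact D) (hDY : D ⊆ Y) :
    ∀ x : X, (⋂ V ∈ 𝔅, gclos (fun x' => (T x' + V) ∩ D) x) ⊆ gclos T x := by
  intro x y hy
  simp only [Set.mem_iInter] at hy
  rw [gclos, Set.mem_setOf_eq, mem_closure_iff_nhds]
  intro N hN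
  rw [nhds_prod_eq, Filter.mem_prod_iff] at hN
  obtain ⟨U, hU, W, hW, hUW⟩ := hN
  have hcont : Continuous fun z : E => y + z := continuous_const.add continuous_id
  have hV'0 : (fun z : E => y + z) ⁻¹' W ∈ nhds (0 : E) := by
    apply hcont.continuousAt (x := (0 : E))
    simpa using hW
  obtain ⟨V'', hV''0, hhalf⟩ := exists_nhds_zero_half hV'0
  obtain ⟨V, hV𝔅, hVsub⟩ := h𝔅basis V'' hV''0
  obtain ⟨hVopen, hV0, hVbal, -⟩ := h𝔅 V hV𝔅
  have h1 := hy V hV𝔅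
  rw [gclos, Set.mem_setOf_eq, mem_closure_iff_nhds] at h1
  have hWy : (fun z : E => y + z) '' V ∈ nhds y := by
    refine IsOpen.mem_nhds ((isOpenMap_add_left y) V hVopen) ⟨0, hV0, by simp⟩
  obtain ⟨⟨x', z⟩, hmem, hgraph⟩ :=
    h1 (U ×ˢ ((fun z : E => y + z) '' V)) (by
      rw [nhds_prod_eq]; exact Filter.prod_mem_prod hU hWy)
  obtain ⟨hx'U, w, hwV, hwz⟩ := hmem
  have hzTV : z ∈ (T x' + V) ∩ D := hgraph
  obtain ⟨t, htT, v, hvV, htvz⟩ := hzTV.1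
  have hnegv : -v ∈ V := hVbal.neg_mem_iff.mpr hvV
  have ht : t = y + (w + -v) := by
    have h2 : t + v = y + w := by
      simp only at htvz hwz; rw [htvz, hwz]
    have : t = t + v - v := by abel
    rw [this, h2]; abel
  have htW : t ∈ W := by
    have := hhalf w (hVsub hwV) (-v) (hVsub hnegv)
    rw [ht]; exact this
  exact ⟨(x', t), hUW ⟨hx'U, htW⟩, htT⟩
end

section
/- Define T₁ : (0,2) → 2^{[1,4]} by T₁(x) = [2−x, 2] for x ∈ (0,1), T₁(1) = {4}, T₁(x) = [1,2] for x ∈ (1,2), and let D = [1,2]. For every ε ≥ 1 and V = (−ε, ε), the correspondence T₁^V(x) = (T₁(x) + V) ∩ D equals [1,2] for all x ∈ (0,2) with x ≠ 1 and equals ∅ when ε ∈ [1,2] and x = 1; moreover, for every ε > 0 the closure-of-graph correspondence of T₁^V is lower semicontinuous with nonempty values, so T₁ is almost w-lower semicontinuous with respect to D. -/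
open Pointwise

/-- Lower semicontinuity of a correspondence on a subset `A` of its domain. -/
def LSCOn {X Y : Type*} [TopologicalSpace X] [TopologicalSpace Y]
    (T : X → Set Y) (A : Set X) : Prop :=
  ∀ x ∈ A, ∀ V : Set Y, IsOpen V → (T x ∩ V).Nonempty →
    ∃ U : Set X, IsOpen U ∧ x ∈ U ∧ ∀ y ∈ U ∩ A, (T y ∩ V).Nonempty

/-- Closure-of-graph correspondence of `T` regarded as defined on `A`. -/
def gclosOn {X Y : Type*} [TopologicalSpace X] [TopologicalSpace Y]
    (T : X → Set Y) (A : Set X) (x : X) : Set Y :=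
  {y | (x, y) ∈ closure {p : X × Y | p.1 ∈ A ∧ p.2 ∈ T p.1}}

noncomputable def T₁ : ℝ → Set ℝ := fun x =>
  if x < 1 then Set.Icc (2 - x) 2 else if x = 1 then {4} else Set.Icc 1 2

noncomputable def T₁V (ε : ℝ) : ℝ → Set ℝ :=
  fun x => (T₁ x + Set.Ioo (-ε) ε) ∩ Set.Icc 1 2

/-- `T` is almost w-lower semicontinuous with respect to `D` on `A`. -/
def AlmostWLSCOn (T : ℝ → Set ℝ) (D A : Set ℝ) : Prop :=
  ∃ 𝔅 : Set (Set ℝ),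
    (∀ V ∈ 𝔅, IsOpen V ∧ (0 : ℝ) ∈ V ∧ V = -V) ∧
    (∀ U ∈ nhds (0 : ℝ), ∃ V ∈ 𝔅, V ⊆ U) ∧
    ∀ V ∈ 𝔅, LSCOn (gclosOn (fun x => (T x + V) ∩ D) A) A

section Aux

variable {ε : ℝ}

lemma memT1V_lt (hε : 0 < ε) {x y : ℝ} (hx : 0 ≤ x) (h1 : x < 1) :
    y ∈ T₁V ε x ↔ (1 ≤ y ∧ y ≤ 2) ∧ 2 - x - ε < y := by
  unfold T₁V T₁
  rw [if_pos h1]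
  constructor
  · rintro ⟨hadd, hy1, hy2⟩
    rw [Set.mem_add] at hadd
    obtain ⟨a, ⟨ha1, ha2⟩, b, ⟨hb1, hb2⟩, rfl⟩ := hadd
    exact ⟨⟨hy1, hy2⟩, by linarith⟩
  · rintro ⟨⟨hy1, hy2⟩, hy3⟩
    refine ⟨?_, hy1, hy2⟩
    rw [Set.mem_add]
    refine ⟨max (2 - x) y, ⟨le_max_left _ _, ?_⟩, y - max (2 - x) y, ⟨?_, ?_⟩, by ring⟩
    · exact max_le (by linarith) hy2
    · rcases max_cases (2 - x) y with ⟨h, _⟩ | ⟨h, _⟩ <;> rw [h] <;> linarith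
    · rcases max_cases (2 - x) y with ⟨h, h'⟩ | ⟨h, h'⟩ <;> rw [h] <;> linarith

lemma memT1V_gt (hε : 0 < ε) {x y : ℝ} (h1 : 1 < x) :
    y ∈ T₁V ε x ↔ 1 ≤ y ∧ y ≤ 2 := by
  unfold T₁V T₁
  rw [if_neg (by linarith), if_neg (by linarith)]
  constructor
  · rintro ⟨-, hy1, hy2⟩; exact ⟨hy1, hy2⟩
  · rintro ⟨hy1, hy2⟩
    refine ⟨?_, hy1, hy2⟩
    rw [Set.mem_add]
    exact ⟨y, ⟨hy1, hy2⟩, 0, ⟨by linarith, hε⟩, by ring⟩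

/-- The graph set of `T₁V ε` over `A = Ioo 0 2`. -/
def Γ (ε : ℝ) : Set (ℝ × ℝ) :=
  {p : ℝ × ℝ | p.1 ∈ Set.Ioo (0 : ℝ) 2 ∧ p.2 ∈ T₁V ε p.1}

/-- Closed superset of the graph. -/
def S (ε : ℝ) : Set (ℝ × ℝ) :=
  {p : ℝ × ℝ | (1 ≤ p.2 ∧ p.2 ≤ 2) ∧ (2 - p.1 - ε ≤ p.2 ∨ 1 ≤ p.1)}

lemma isClosed_S : IsClosed (S ε) := by
  have h1 : IsClosed {p : ℝ × ℝ | 1 ≤ p.2} := isClosed_le continuous_const continuous_snd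
  have h2 : IsClosed {p : ℝ × ℝ | p.2 ≤ 2} := isClosed_le continuous_snd continuous_const
  have h3 : IsClosed {p : ℝ × ℝ | 2 - p.1 - ε ≤ p.2} :=
    isClosed_le (by fun_prop) continuous_snd
  have h4 : IsClosed {p : ℝ × ℝ | 1 ≤ p.1} := isClosed_le continuous_const continuous_fst
  have : S ε = ({p : ℝ × ℝ | 1 ≤ p.2} ∩ {p : ℝ × ℝ | p.2 ≤ 2}) ∩
      ({p : ℝ × ℝ | 2 - p.1 - ε ≤ p.2} ∪ {p : ℝ × ℝ | 1 ≤ p.1}) := by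
    ext p; simp [S, Set.mem_inter_iff, and_assoc]
  rw [this]
  exact ((h1.inter h2).inter (h3.union h4))

lemma graph_subset_S (hε : 0 < ε) : Γ ε ⊆ S ε := by
  rintro ⟨x, y⟩ ⟨⟨hx0, hx2⟩, hy⟩
  rcases lt_trichotomy x 1 with h | h | h
  · rw [memT1V_lt hε hx0.le h] at hy
    exact ⟨hy.1, Or.inl hy.2.le⟩
  · subst h
    refine ⟨?_, Or.inr le_rfl⟩
    exact hy.2
  · rw [memT1V_gt hε h] at hy
    exact ⟨hy, Or.inr h.le⟩

lemma mem_closure_graph (hε : 0 < ε) {x y : ℝ} (hx0 : 0 < x) (hx2 : x < 2)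
    (hy1 : 1 ≤ y) (hy2 : y ≤ 2) (h : 1 ≤ x ∨ 2 - x - ε ≤ y) :
    (x, y) ∈ closure (Γ ε) := by
  rcases lt_or_ge x 1 with hx1 | hx1
  · -- x < 1, so 2 - x - ε ≤ y
    have hyb : 2 - x - ε ≤ y := h.resolve_left (not_le.2 hx1)
    rcases eq_or_lt_of_le hyb with heq | hlt
    · -- y = 2 - x - ε, approximate from above
      have hylt2 : y < 2 := by linarith
      rw [Metric.mem_closure_iff]
      intro δ hδ
      refine ⟨(x, min 2 (y + δ / 2)), ⟨⟨hx0, hx2⟩, ?_⟩, ?_⟩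
      · rw [memT1V_lt hε hx0.le hx1]
        refine ⟨⟨le_min (by norm_num) (by linarith), min_le_left _ _⟩, ?_⟩
        exact lt_min (by linarith) (by linarith)
      · rw [Prod.dist_eq]
        simp only [dist_self]
        have h1 : min 2 (y + δ / 2) ≤ y + δ / 2 := min_le_right _ _
        have h2 : y ≤ min 2 (y + δ / 2) := le_min hy2 (by linarith)
        rw [Real.dist_eq, abs_of_nonpos (by linarith)]
        refine max_lt hδ (by linarith)
    · exact subset_closure ⟨⟨hx0, hx2⟩, (memT1V_lt hε hx0.le hx1).2 ⟨⟨hy1, hy2⟩, hlt⟩⟩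
  · rcases eq_or_lt_of_le hx1 with heq | hgt
    · -- x = 1, approximate from the right
      rw [Metric.mem_closure_iff]
      intro δ hδ
      set x' := min (3/2 : ℝ) (x + δ / 2) with hx'
      have hx'1 : 1 < x' := lt_min (by linarith) (by linarith)
      have hx'2 : x' < 2 := lt_of_le_of_lt (min_le_left _ _) (by norm_num)
      refine ⟨(x', y), ⟨⟨by linarith, hx'2⟩, (memT1V_gt hε hx'1).2 ⟨hy1, hy2⟩⟩, ?_⟩
      rw [Prod.dist_eq]
      simp only [dist_self]
      have h1 : x' ≤ x + δ / 2 := min_le_right _ _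
      have h2 : x ≤ x' := by rw [hx']; exact le_min (by linarith) (by linarith)
      rw [Real.dist_eq, abs_of_nonpos (by linarith)]
      exact max_lt (by linarith) hδ
    · exact subset_closure ⟨⟨hx0, hx2⟩, (memT1V_gt hε hgt).2 ⟨hy1, hy2⟩⟩

/-- Lower endpoint of the closure-of-graph values. -/
noncomputable def m (ε : ℝ) : ℝ → ℝ := fun x => max 1 (2 - ε - min x 1)

lemma continuous_m : Continuous (m ε) := by unfold m; fun_prop

lemma m_lt_two (hε : 0 < ε) {x : ℝ} (hx0 : 0 < x) : m ε x < 2 := by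
  unfold m
  rcases min_cases x 1 with ⟨h, h'⟩ | ⟨h, h'⟩ <;> rw [h] <;>
    apply max_lt (by norm_num) (by linarith)

lemma gclos_eq (hε : 0 < ε) {x : ℝ} (hx : x ∈ Set.Ioo (0 : ℝ) 2) :
    gclosOn (T₁V ε) (Set.Ioo (0 : ℝ) 2) x = Set.Icc (m ε x) 2 := by
  obtain ⟨hx0, hx2⟩ := hx
  ext y
  constructor
  · intro hy
    have hS : (x, y) ∈ S ε :=
      (closure_minimal (graph_subset_S hε) isClosed_S) hy
    obtain ⟨⟨hy1, hy2⟩, hd⟩ := hS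
    refine ⟨?_, hy2⟩
    unfold m
    rcases hd with hd | hd
    · rcases min_cases x 1 with ⟨h, h'⟩ | ⟨h, h'⟩ <;> rw [h] <;>
        exact max_le hy1 (by linarith)
    · have : min x 1 = 1 := min_eq_right hd
      rw [this]
      exact max_le hy1 (by linarith)
  · rintro ⟨hy1, hy2⟩
    have hm1 : (1 : ℝ) ≤ m ε x := le_max_left _ _
    apply mem_closure_graph hε hx0 hx2 (by linarith) hy2
    rcases le_or_gt 1 x with h | h
    · exact Or.inl h
    · right
      have : m ε x = max 1 (2 - ε - x) := by unfold m; rw [min_eq_left h.le]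
      have h2 : 2 - ε - x ≤ m ε x := this ▸ le_max_right _ _
      linarith

lemma part3 (hε : 0 < ε) :
    LSCOn (gclosOn (T₁V ε) (Set.Ioo (0 : ℝ) 2)) (Set.Ioo (0 : ℝ) 2) ∧
      ∀ x ∈ Set.Ioo (0 : ℝ) 2, (gclosOn (T₁V ε) (Set.Ioo (0 : ℝ) 2) x).Nonempty := by
  constructor
  · intro x hx V hV hne
    rw [gclos_eq hε hx] at hne
    obtain ⟨y₀, ⟨hym, hy2⟩, hyV⟩ := hne
    obtain ⟨δ, hδ, hball⟩ := Metric.isOpen_iff.1 hV y₀ hyV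
    set y₁ := min 2 (y₀ + δ / 2) with hy₁
    have hmx2 : m ε x < 2 := m_lt_two hε hx.1
    have hy₁2 : y₁ ≤ 2 := min_le_left _ _
    have hy₁gt : m ε x < y₁ := lt_min hmx2 (by linarith)
    have hy₁V : y₁ ∈ V := by
      apply hball
      rw [Metric.mem_ball, Real.dist_eq]
      have h1 : y₁ ≤ y₀ + δ / 2 := min_le_right _ _
      have h2 : y₀ ≤ y₁ := le_min hy2 (by linarith)
      rw [abs_of_nonneg (by linarith)]
      linarith
    refine ⟨(m ε) ⁻¹' Set.Iio y₁, (isOpen_Iio).preimage continuous_m, hy₁gt, ?_⟩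
    rintro z ⟨hz1, hz2⟩
    rw [gclos_eq hε hz2]
    exact ⟨y₁, ⟨(le_of_lt hz1), hy₁2⟩, hy₁V⟩
  · intro x hx
    rw [gclos_eq hε hx]
    exact Set.nonempty_Icc.2 (m_lt_two hε hx.1).le

end Aux

theorem stmt8 :
    (∀ ε : ℝ, 1 ≤ ε → ∀ x ∈ Set.Ioo (0 : ℝ) 2, x ≠ 1 → T₁V ε x = Set.Icc 1 2) ∧
    (∀ ε ∈ Set.Icc (1 : ℝ) 2, T₁V ε 1 = ∅) ∧
    (∀ ε : ℝ, 0 < ε →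
      LSCOn (gclosOn (T₁V ε) (Set.Ioo (0 : ℝ) 2)) (Set.Ioo (0 : ℝ) 2) ∧
      ∀ x ∈ Set.Ioo (0 : ℝ) 2, (gclosOn (T₁V ε) (Set.Ioo (0 : ℝ) 2) x).Nonempty) ∧
    AlmostWLSCOn T₁ (Set.Icc 1 2) (Set.Ioo 0 2) := by
  refine ⟨?_, ?_, ?_, ?_⟩
  · rintro ε hε x ⟨hx0, hx2⟩ hx1
    have hε0 : (0 : ℝ) < ε := by linarith
    ext y
    rcases lt_trichotomy x 1 with h | h | h
    · rw [memT1V_lt hε0 hx0.le h, Set.mem_Icc]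
      exact ⟨fun h => h.1, fun hy => ⟨hy, by linarith [hy.1]⟩⟩
    · exact absurd h hx1
    · rw [memT1V_gt hε0 h, Set.mem_Icc]
  · rintro ε ⟨hε1, hε2⟩
    rw [Set.eq_empty_iff_forall_notMem]
    intro y hy
    unfold T₁V T₁ at hy
    rw [if_neg (by norm_num), if_pos rfl] at hy
    obtain ⟨hadd, hy1, hy2⟩ := hy
    rw [Set.mem_add] at hadd
    obtain ⟨a, ha, b, ⟨hb1, hb2⟩, rfl⟩ := hadd
    rw [Set.mem_singleton_iff] at ha
    subst ha
    linarith
  · exact fun ε hε => part3 hε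
  · refine ⟨{V | ∃ ε : ℝ, 0 < ε ∧ V = Set.Ioo (-ε) ε}, ?_, ?_, ?_⟩
    · rintro V ⟨ε, hε, rfl⟩
      refine ⟨isOpen_Ioo, ⟨by linarith, hε⟩, ?_⟩
      rw [Set.neg_Ioo, neg_neg]
    · intro U hU
      obtain ⟨δ, hδ, hball⟩ := Metric.mem_nhds_iff.1 hU
      refine ⟨Set.Ioo (-δ) δ, ⟨δ, hδ, rfl⟩, ?_⟩
      rw [← show Metric.ball (0 : ℝ) δ = Set.Ioo (-δ) δ by
        rw [Real.ball_eq_Ioo]; norm_num]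
      exact hball
    · rintro V ⟨ε, hε, rfl⟩
      exact (part3 hε).1
end
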